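/- In the catch-up greedy algorithm with speed $c \ge 2$ (covering $c$ hitherto-uncovered elements per time-step) running on a slowly evolving set $X$ (changing by at most one element per time-step), if the algorithm starts at time $t$ with $|X(t)| = N$, it terminates by time-step $t + \lceil N/(c-1) \rceil$. Moreover, if at some time $t'$ during the run the number of uncovered elements is $R$, the remaining run time is at most $\lceil R/(c-1) \rceil$, and at most $\lceil R/(c-1)\rceil$ elements inserted after $t'$ can end up passive; hence the number of passive elements at termination is at most $\frac{1}{c-1} \cdot (\text{number of covered-late elements}) + O(1)$. -/
import Mathlib


/-- Catch-up greedy running-time and passive-element bounds: the uncovered count `u`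
(covering `c` elements per step while at most one is inserted per step) reaches 0 within
`⌈u(t')/(c-1)⌉` steps of any time `t'`, and any counter `p` of passive elements that
increases by at most one per step gains at most `⌈u(t')/(c-1)⌉` during the remaining
run. -/
theorem catchup_greedy_bounds (c t : ℕ) (hc : 2 ≤ c) (u : ℕ → ℕ)
    (hstep : ∀ s, t ≤ s → u (s + 1) ≤ u s + 1 - c) :
    ∀ t', t ≤ t' →
      (∃ k ≤ (u t' + c - 2) / (c - 1), u (t' + k) = 0) ∧
      (∀ p : ℕ → ℕ, (∀ s, t' ≤ s → p (s + 1) ≤ p s + 1) →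
        ∀ k ≤ (u t' + c - 2) / (c - 1),
          p (t' + k) ≤ p t' + (u t' + c - 2) / (c - 1)) := by
  intro t' ht'
  have hbpos : 0 < c - 1 := by omega
  have key : ∀ k, u (t' + k) ≤ u t' - k * (c - 1) := by
    intro k
    induction k with
    | zero => simp
    | succ n ih =>
      have h := hstep (t' + n) (by omega)
      have hmul : (n + 1) * (c - 1) = n * (c - 1) + (c - 1) := by ring
      show u (t' + n + 1) ≤ _
      omega
  set K := (u t' + c - 2) / (c - 1) with hK
  have hKb : u t' ≤ K * (c - 1) := by
    have hdm : (c - 1) * K + (u t' + c - 2) % (c - 1) = u t' + c - 2 :=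
      Nat.div_add_mod _ _
    have hmod : (u t' + c - 2) % (c - 1) < c - 1 := Nat.mod_lt _ hbpos
    rw [Nat.mul_comm] at hdm
    omega
  have hzero : u (t' + K) = 0 := by
    have := key K
    omega
  refine ⟨⟨K, le_refl _, hzero⟩, ?_⟩
  intro p hp k hk
  have hpk : ∀ m, p (t' + m) ≤ p t' + m := by
    intro m
    induction m with
    | zero => simp
    | succ n ih =>
      have := hp (t' + n) (by omega)
      show p (t' + n + 1) ≤ _
      omega
  have := hpk k
  omega
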